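/- Concatenation of centred Catalan sets adds areas: for centred Catalan sets S1, S2, area(M(S1 ∘ S2)) = area(M(S1)) + area(M(S2)), where area(M) is the area between the Motzkin path M and the x-axis. -/

import Mathlib

open Finset

/-- `S` is a centred Catalan set of size `n`: an `n`-subset of `{-n+1,…,n-1}` with
`|S ∩ {-i,…,i}| ≥ i+1` for all `0 ≤ i ≤ n-1`. -/
def IsCCS (n : ℕ) (S : Finset ℤ) : Prop :=
  S.card = n ∧ (∀ x ∈ S, -(n : ℤ) + 1 ≤ x ∧ x ≤ (n : ℤ) - 1) ∧
  ∀ i : ℕ, i ≤ n - 1 → (i : ℤ) + 1 ≤ ((S ∩ Finset.Icc (-(i : ℤ)) (i : ℤ)).card : ℤ)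

/-- The dilation operator `s_l`. -/
def dil (l : ℤ) (x : ℤ) : ℤ := if 0 < x then x + l else if x = 0 then 0 else x - l

/-- Concatenation `S1 ∘ S2 = S1 ∪ s_{|S1|-1}(S2)` of centred Catalan sets. -/
def ccsConcat (S1 S2 : Finset ℤ) : Finset ℤ := S1 ∪ S2.image (dil ((S1.card : ℤ) - 1))

/-- A Dyck path: steps `±1`, nonnegative partial sums, total sum `0`. -/
def IsDyck (L : List ℤ) : Prop :=
  (∀ x ∈ L, x = 1 ∨ x = -1) ∧ (∀ k, 0 ≤ (L.take k).sum) ∧ L.sum = 0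

/-- The `p`-th integer in the reading order `0, -1, 1, -2, 2, …, -n+1, n-1, n`. -/
def readOrder (n : ℕ) (p : ℕ) : ℤ :=
  if p = 2 * n - 1 then (n : ℤ)
  else if p % 2 = 1 then -(((p + 1) / 2 : ℕ) : ℤ) else ((p / 2 : ℕ) : ℤ)

/-- The Dyck path `D(S)` associated with a centred Catalan set `S` of size `n`. -/
def toDyck (n : ℕ) (S : Finset ℤ) : List ℤ :=
  (List.range (2 * n)).map fun p => if readOrder n p ∈ S then (1 : ℤ) else -1

/-- A Motzkin path: steps in `{-1,0,1}`, nonnegative partial sums, total sum `0`. -/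
def IsMotzkin (L : List ℤ) : Prop :=
  (∀ x ∈ L, x = -1 ∨ x = 0 ∨ x = 1) ∧ (∀ k, 0 ≤ (L.take k).sum) ∧ L.sum = 0

/-- The Motzkin path `M(S)` of a centred Catalan set `S` of size `n`:
its `i`-th step is `|{-i,i} ∩ S| - 1`. -/
def motz (n : ℕ) (S : Finset ℤ) : List ℤ :=
  (List.range (n - 1)).map fun k =>
    ((S ∩ ({-((k : ℤ) + 1), (k : ℤ) + 1} : Finset ℤ)).card : ℤ) - 1

/-- The area enclosed between a Motzkin path and the x-axis
(sum of the trapezoid areas `(h_{j-1}+h_j)/2`, which for a path returning to the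
x-axis equals the sum of the heights `h_0, …, h_{len-1}`). -/
def marea (L : List ℤ) : ℤ := ∑ j ∈ Finset.range L.length, (L.take j).sum

/-- In every row, consecutive nonzero entries alternate in sign. -/
def RowAlt (A : ℤ → ℤ → ℤ) : Prop :=
  ∀ i j1 j2, j1 < j2 → A i j1 ≠ 0 → A i j2 ≠ 0 →
    (∀ j, j1 < j → j < j2 → A i j = 0) → A i j1 = -A i j2

/-- In every column, consecutive nonzero entries alternate in sign. -/
def ColAlt (A : ℤ → ℤ → ℤ) : Prop :=
  ∀ j i1 i2, i1 < i2 → A i1 j ≠ 0 → A i2 j ≠ 0 →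
    (∀ i, i1 < i → i < i2 → A i j = 0) → A i1 j = -A i2 j

/-- In every column, the first nonzero entry from the top (rows are numbered from
the bottom, so the entry with the largest row index) is `1`. -/
def ColTopPos (A : ℤ → ℤ → ℤ) : Prop :=
  ∀ i j, A i j ≠ 0 → (∀ i', i < i' → A i' j = 0) → A i j = 1

/-- An alternating sign triangle of order `n`, encoded as `A : ℤ → ℤ → ℤ` where
`A i j` is the entry in row `i` (from the bottom, `1 ≤ i ≤ n`) and column `j`
(`-i+1 ≤ j ≤ i-1`), with value `0` outside this range. -/
def IsAST (n : ℕ) (A : ℤ → ℤ → ℤ) : Prop :=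
  (∀ i j, A i j ≠ 0 → 1 ≤ i ∧ i ≤ (n : ℤ) ∧ -i + 1 ≤ j ∧ j ≤ i - 1) ∧
  (∀ i j, A i j = -1 ∨ A i j = 0 ∨ A i j = 1) ∧
  (∀ i : ℤ, 1 ≤ i → i ≤ (n : ℤ) → ∑ j ∈ Finset.Icc (-i + 1) (i - 1), A i j = 1) ∧
  RowAlt A ∧ ColAlt A ∧ ColTopPos A

/-- The set of column labels of an AST of order `n` with positive column-sum. -/
noncomputable def astCols (n : ℕ) (A : ℤ → ℤ → ℤ) : Finset ℤ :=
  (Finset.Icc (-(n : ℤ) + 1) ((n : ℤ) - 1)).filter fun j =>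
    0 < ∑ i ∈ Finset.Icc (1 : ℤ) (n : ℤ), A i j

/-- An `(n,l)`-alternating sign trapezoid, encoded as `A : ℤ → ℤ → ℤ` where
`A i j` is the entry in row `i` (from the bottom, `1 ≤ i ≤ n`) and column `j`
(`-i+1 ≤ j ≤ l+i-1`), with value `0` outside this range. -/
def IsASTrap (n l : ℕ) (A : ℤ → ℤ → ℤ) : Prop :=
  (∀ i j, A i j ≠ 0 → 1 ≤ i ∧ i ≤ (n : ℤ) ∧ -i + 1 ≤ j ∧ j ≤ (l : ℤ) + i - 1) ∧
  (∀ i j, A i j = -1 ∨ A i j = 0 ∨ A i j = 1) ∧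
  (∀ i : ℤ, 1 ≤ i → i ≤ (n : ℤ) →
    ∑ j ∈ Finset.Icc (-i + 1) ((l : ℤ) + i - 1), A i j = 1) ∧
  (∀ j : ℤ, 1 ≤ j → j ≤ (l : ℤ) - 1 → ∑ i ∈ Finset.Icc (1 : ℤ) (n : ℤ), A i j = 0) ∧
  RowAlt A ∧ ColAlt A ∧ ColTopPos A

/-- The centred Catalan set `S(A)` associated with an `(n,l)`-AS-trapezoid `A`:
take the columns with positive column-sum, subtract `1` from nonpositive labels,
subtract `l-1` from positive labels, and adjoin `0`. -/
noncomputable def trapCat (n l : ℕ) (A : ℤ → ℤ → ℤ) : Finset ℤ :=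
  insert 0
    (((Finset.Icc (-(n : ℤ) + 1) ((l : ℤ) + n - 1)).filter
        (fun j => 0 < ∑ i ∈ Finset.Icc (1 : ℤ) (n : ℤ), A i j)).image
      fun j => if j ≤ 0 then j - 1 else j - ((l : ℤ) - 1))

/-- `wS n l S`: the number of `(n,l)`-AS-trapezoids with associated centred
Catalan set `S`. -/
noncomputable def wS (n l : ℕ) (S : Finset ℤ) : ℕ :=
  Nat.card {A : ℤ → ℤ → ℤ // IsASTrap n l A ∧ trapCat n l A = S}

/-- `wM n l M`: the number of `(n,l)`-AS-trapezoids whose associated Motzkin path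
is `M`. -/
noncomputable def wM (n l : ℕ) (M : List ℤ) : ℕ :=
  Nat.card {A : ℤ → ℤ → ℤ // IsASTrap n l A ∧ motz (n + 1) (trapCat n l A) = M}

/-- Placing the trapezoid `A2` centred above the `n1`-row trapezoid `A1`. -/
def stack (n1 : ℕ) (A1 A2 : ℤ → ℤ → ℤ) : ℤ → ℤ → ℤ :=
  fun i j => if i ≤ (n1 : ℤ) then A1 i j else A2 (i - n1) (j + n1)


lemma motz_eq (n : ℕ) (S : Finset ℤ) : motz n S = (List.range (n - 1)).map
    (fun k : ℕ => ((S ∩ ({-((k : ℤ) + 1), (k : ℤ) + 1} : Finset ℤ)).card : ℤ) - 1) := by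
  unfold motz
  rw [show (do let a ← List.range (n - 1); pure ((a : ℕ) : ℤ)) =
      (List.range (n - 1)).map (fun a : ℕ => (a : ℤ)) from List.map_eq_flatMap.symm]
  rw [List.map_map]
  rfl

lemma list_sum_range (N : ℕ) (f : ℕ → ℤ) :
    ((List.range N).map f).sum = ∑ k ∈ Finset.range N, f k := rfl

lemma dil_inj {l : ℤ} (hl : 0 ≤ l) : Function.Injective (dil l) := by
  intro a b hab
  unfold dil at hab
  split_ifs at hab <;> omega

lemma ccs_zero_mem {n : ℕ} {S : Finset ℤ} (hn : 1 ≤ n) (h : IsCCS n S) : (0 : ℤ) ∈ S := by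
  have h1 := h.2.2 0 (by omega)
  have hne : (S ∩ Finset.Icc (-((0 : ℕ) : ℤ)) ((0 : ℕ) : ℤ)).Nonempty := by
    rw [← Finset.card_pos]
    by_contra hc
    simp only [not_lt, Nat.le_zero] at hc
    rw [hc] at h1
    norm_num at h1
  obtain ⟨x, hx⟩ := hne
  simp only [Finset.mem_inter, Nat.cast_zero, neg_zero, Finset.Icc_self,
    Finset.mem_singleton] at hx
  have := hx.1
  rwa [hx.2] at this

lemma motz_sum {n : ℕ} {S : Finset ℤ} (hn : 1 ≤ n) (h : IsCCS n S) :
    (motz n S).sum = 0 := by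
  obtain ⟨hc, hb, hi⟩ := h
  have h0 : (0 : ℤ) ∈ S := ccs_zero_mem hn ⟨hc, hb, hi⟩
  have hdisj : ∀ k ∈ Finset.range (n - 1), ∀ k' ∈ Finset.range (n - 1), k ≠ k' →
      Disjoint (S ∩ ({-((k : ℤ) + 1), (k : ℤ) + 1} : Finset ℤ))
        (S ∩ ({-((k' : ℤ) + 1), (k' : ℤ) + 1} : Finset ℤ)) := by
    intro k _ k' _ hkk'
    rw [Finset.disjoint_left]
    intro x hx hx'
    simp only [Finset.mem_inter, Finset.mem_insert, Finset.mem_singleton] at hx hx'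
    omega
  have hbU : (Finset.range (n - 1)).biUnion
      (fun k => S ∩ ({-((k : ℤ) + 1), (k : ℤ) + 1} : Finset ℤ)) = S.erase 0 := by
    ext x
    simp only [Finset.mem_biUnion, Finset.mem_erase, Finset.mem_inter, Finset.mem_insert,
      Finset.mem_singleton, Finset.mem_range]
    constructor
    · rintro ⟨k, hk, hxS, hx⟩
      exact ⟨by omega, hxS⟩
    · rintro ⟨hx0, hxS⟩
      have hbx := hb x hxS
      exact ⟨x.natAbs - 1, by omega, hxS, by omega⟩
  have key : ∑ k ∈ Finset.range (n - 1),
      (S ∩ ({-((k : ℤ) + 1), (k : ℤ) + 1} : Finset ℤ)).card = n - 1 := by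
    rw [← Finset.card_biUnion hdisj, hbU, Finset.card_erase_of_mem h0, hc]
  rw [motz_eq, list_sum_range, Finset.sum_sub_distrib, ← Nat.cast_sum, key,
    Finset.sum_const, Finset.card_range, nsmul_eq_mul, mul_one, sub_self]

lemma sum_range_split (N M : ℕ) (g : ℕ → ℤ) :
    ∑ j ∈ Finset.range (N + M), g j
      = ∑ j ∈ Finset.range N, g j + ∑ j ∈ Finset.range M, g (N + j) := by
  induction M with
  | zero => simp
  | succ M ih =>
    rw [show N + (M + 1) = (N + M) + 1 from rfl, Finset.sum_range_succ, ih,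
      Finset.sum_range_succ, add_assoc]

lemma marea_append (L1 L2 : List ℤ) (h : L1.sum = 0) :
    marea (L1 ++ L2) = marea L1 + marea L2 := by
  unfold marea
  rw [List.length_append, sum_range_split]
  congr 1
  · exact Finset.sum_congr rfl fun j hj => by
      rw [List.take_append_of_le_length (le_of_lt (Finset.mem_range.mp hj))]
  · exact Finset.sum_congr rfl fun j hj => by
      rw [List.take_length_add_append, List.sum_append, h, zero_add]

lemma concat_motz (m n : ℕ) (hm : 1 ≤ m) (hn : 1 ≤ n) (S1 S2 : Finset ℤ)
    (h1 : IsCCS m S1) (h2 : IsCCS n S2) :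
    motz (m + n - 1) (ccsConcat S1 S2) = motz m S1 ++ motz n S2 := by
  obtain ⟨hc1, hb1, _⟩ := h1
  obtain ⟨hc2, hb2, _⟩ := h2
  rw [motz_eq, motz_eq, motz_eq]
  unfold ccsConcat
  rw [hc1]
  rw [show m + n - 1 - 1 = (m - 1) + (n - 1) by omega, List.range_add, List.map_append,
    List.map_map]
  congr 1
  · apply List.map_congr_left
    intro k hk
    rw [List.mem_range] at hk
    have hset : (S1 ∪ S2.image (dil ((m : ℤ) - 1))) ∩
        ({-((k : ℤ) + 1), (k : ℤ) + 1} : Finset ℤ)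
        = S1 ∩ ({-((k : ℤ) + 1), (k : ℤ) + 1} : Finset ℤ) := by
      ext x
      simp only [Finset.mem_inter, Finset.mem_union, Finset.mem_image, Finset.mem_insert,
        Finset.mem_singleton]
      constructor
      · rintro ⟨hx, hp⟩
        refine ⟨?_, hp⟩
        rcases hx with hx | ⟨y, hy, rfl⟩
        · exact hx
        · exfalso
          unfold dil at hp
          split_ifs at hp <;> omega
      · exact fun ⟨hx, hp⟩ => ⟨Or.inl hx, hp⟩
    rw [hset]
  · apply List.map_congr_left
    intro t ht
    rw [List.mem_range] at ht
    simp only [Function.comp]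
    have hset : (S1 ∪ S2.image (dil ((m : ℤ) - 1))) ∩
        ({-(((m - 1 + t : ℕ) : ℤ) + 1), ((m - 1 + t : ℕ) : ℤ) + 1} : Finset ℤ)
        = (S2 ∩ ({-((t : ℤ) + 1), (t : ℤ) + 1} : Finset ℤ)).image (dil ((m : ℤ) - 1)) := by
      ext x
      simp only [Finset.mem_inter, Finset.mem_union, Finset.mem_image, Finset.mem_insert,
        Finset.mem_singleton]
      constructor
      · rintro ⟨hx, hp⟩
        rcases hx with hx | ⟨y, hy, rfl⟩
        · exfalso
          have hbx := hb1 x hx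
          omega
        · refine ⟨y, ⟨hy, ?_⟩, rfl⟩
          unfold dil at hp
          split_ifs at hp <;> omega
      · rintro ⟨y, ⟨hy, hyp⟩, rfl⟩
        refine ⟨Or.inr ⟨y, hy, rfl⟩, ?_⟩
        unfold dil
        split_ifs <;> omega
    rw [hset, Finset.card_image_of_injective _ (dil_inj (by push_cast; omega))]


/-- Concatenation of centred Catalan sets adds areas:
`area(M(S1 ∘ S2)) = area(M(S1)) + area(M(S2))`. -/
theorem stmt16 (m n : ℕ) (hm : 1 ≤ m) (hn : 1 ≤ n) (S1 S2 : Finset ℤ)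
    (h1 : IsCCS m S1) (h2 : IsCCS n S2) :
    marea (motz (m + n - 1) (ccsConcat S1 S2))
      = marea (motz m S1) + marea (motz n S2) := by
  rw [concat_motz m n hm hn S1 S2 h1 h2, marea_append _ _ (motz_sum hm h1)]
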